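/- A nondegenerate [n,k,d]_{q^m/q} code C with generator matrix G is rank-metric intersecting if and only if for every A ∈ GL(n,q), the code C·A is Hamming-metric intersecting. -/

import Mathlib

open Module Submodule

variable (Fq : Type*) {L : Type*} [Field Fq] [Field L] [Algebra Fq L]

/-- The rank support of a vector `x ∈ L^n` (L = F_{q^m}, Fq = F_q): the `Fq`-span of the
rows of its coordinate matrix, equivalently the span of all `(f (x 1), …, f (x n))` for
`Fq`-linear functionals `f : L → Fq`. -/
def rsupp {n : ℕ} (x : Fin n → L) : Submodule Fq (Fin n → Fq) :=
  Submodule.span Fq {v | ∃ f : L →ₗ[Fq] Fq, v = fun j => f (x j)}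

/-- The rank (weight) of a vector. -/
noncomputable def rrk {n : ℕ} (x : Fin n → L) : ℕ :=
  Module.finrank Fq (rsupp Fq x)

/-- A linear rank-metric code is intersecting if the supports of any two nonzero
codewords meet nontrivially. -/
def RankIntersecting {n : ℕ} (C : Submodule L (Fin n → L)) : Prop :=
  ∀ c ∈ C, ∀ c' ∈ C, c ≠ 0 → c' ≠ 0 → rsupp Fq c ⊓ rsupp Fq c' ≠ ⊥

/-- A rank-metric code is nondegenerate if the supports of its codewords span `Fq^n`. -/
def Nondeg {n : ℕ} (C : Submodule L (Fin n → L)) : Prop :=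
  (⨆ c ∈ C, rsupp Fq c) = ⊤

/-- An `L`-hyperplane of `L^k`. -/
def IsHyperplane {k : ℕ} (H : Submodule L (Fin k → L)) : Prop :=
  ∃ φ : (Fin k → L) →ₗ[L] L, φ ≠ 0 ∧ H = LinearMap.ker φ

/-- A `q`-system `U` is 2-spannable if it is spanned by its intersections with two
`L`-hyperplanes. -/
def TwoSpannable {k : ℕ} (U : Submodule Fq (Fin k → L)) : Prop :=
  ∃ H₁ H₂ : Submodule L (Fin k → L), IsHyperplane H₁ ∧ IsHyperplane H₂ ∧
    U = (U ⊓ H₁.restrictScalars Fq) ⊔ (U ⊓ H₂.restrictScalars Fq)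

/-- A minimal rank-metric code. -/
def MinimalCode {n : ℕ} (C : Submodule L (Fin n → L)) : Prop :=
  ∀ c ∈ C, ∀ c' ∈ C, rsupp Fq c ≤ rsupp Fq c' → ∃ lam : L, c' = lam • c

open Matrix

section Aux

variable {Fq}

lemma mem_rsupp {n : ℕ} (x : Fin n → L) (f : L →ₗ[Fq] Fq) :
    (fun j => f (x j)) ∈ rsupp Fq x :=
  Submodule.subset_span ⟨f, rfl⟩

lemma rsupp_apply_eq_zero {n : ℕ} {x : Fin n → L} {i : Fin n} (hx : x i = 0) :
    ∀ v ∈ rsupp Fq x, v i = 0 := by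
  intro v hv
  have hle : rsupp Fq x ≤ LinearMap.ker (LinearMap.proj i : (Fin n → Fq) →ₗ[Fq] Fq) := by
    rw [rsupp, Submodule.span_le]
    rintro w ⟨f, rfl⟩
    simp [LinearMap.mem_ker, hx]
  exact hle hv

lemma exists_rsupp_ne {n : ℕ} {x : Fin n → L} {i : Fin n} (hx : x i ≠ 0) :
    ∃ v ∈ rsupp Fq x, v i ≠ 0 := by
  obtain ⟨f, hf⟩ : ∃ f : L →ₗ[Fq] Fq, f (x i) ≠ 0 := by
    by_contra h
    push_neg at h
    exact hx ((Module.forall_dual_apply_eq_zero_iff Fq (x i)).mp h)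
  exact ⟨_, mem_rsupp x f, hf⟩

lemma vecMul_map_apply {n : ℕ} (x : Fin n → L) (A : Matrix (Fin n) (Fin n) Fq)
    (f : L →ₗ[Fq] Fq) :
    (fun i => f (Matrix.vecMul x (A.map (algebraMap Fq L)) i)) =
      A.vecMulLinear (fun j => f (x j)) := by
  funext i
  simp only [Matrix.vecMulLinear_apply, Matrix.vecMul, dotProduct, Matrix.map_apply]
  rw [map_sum]
  congr 1
  funext j
  rw [mul_comm, ← Algebra.smul_def, _root_.map_smul, smul_eq_mul, mul_comm]

lemma rsupp_vecMul {n : ℕ} (x : Fin n → L) (A : Matrix (Fin n) (Fin n) Fq) :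
    rsupp Fq (Matrix.vecMul x (A.map (algebraMap Fq L))) =
      (rsupp Fq x).map A.vecMulLinear := by
  rw [rsupp, rsupp, Submodule.map_span]
  congr 1
  ext v
  constructor
  · rintro ⟨f, rfl⟩
    exact ⟨_, ⟨f, rfl⟩, (vecMul_map_apply x A f).symm⟩
  · rintro ⟨w, ⟨f, rfl⟩, rfl⟩
    exact ⟨f, (vecMul_map_apply x A f).symm⟩

end Aux

set_option synthInstance.maxHeartbeats 1000000

/-- a nondegenerate code is rank-metric intersecting iff every
`GL(n,q)`-equivalent code is Hamming-metric intersecting. -/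
theorem stmt10 {n : ℕ} (C : Submodule L (Fin n → L)) (hnd : Nondeg Fq C) :
    RankIntersecting Fq C ↔
      ∀ A : Matrix (Fin n) (Fin n) Fq, IsUnit A →
        ∀ c ∈ C, ∀ c' ∈ C, c ≠ 0 → c' ≠ 0 →
          ∃ i, Matrix.vecMul c (A.map (algebraMap Fq L)) i ≠ 0 ∧
               Matrix.vecMul c' (A.map (algebraMap Fq L)) i ≠ 0 := by
  constructor
  · -- forward direction
    intro hint A hA c hc c' hc' h0 h0'
    obtain ⟨u, hu, hune⟩ :=
      Submodule.exists_mem_ne_zero_of_ne_bot (hint c hc c' hc' h0 h0')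
    -- u·A ≠ 0 since A is invertible
    have huA : Matrix.vecMul u A ≠ 0 := by
      intro h
      apply hune
      have h2 : Matrix.vecMul (Matrix.vecMul u A) (↑hA.unit⁻¹ : Matrix (Fin n) (Fin n) Fq) =
          Matrix.vecMul (0 : Fin n → Fq) (↑hA.unit⁻¹ : Matrix (Fin n) (Fin n) Fq) := by
        rw [h]
      rw [Matrix.vecMul_vecMul, Matrix.zero_vecMul] at h2
      have h3 : A * (↑hA.unit⁻¹ : Matrix (Fin n) (Fin n) Fq) = 1 := by
        have := hA.unit.mul_inv
        rwa [hA.unit_spec] at this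
      rwa [h3, Matrix.vecMul_one] at h2
    obtain ⟨i, hi⟩ := Function.ne_iff.mp huA
    refine ⟨i, ?_, ?_⟩
    · intro h
      apply hi
      refine rsupp_apply_eq_zero h (Matrix.vecMul u A) ?_
      rw [rsupp_vecMul]
      exact ⟨u, hu.1, rfl⟩
    · intro h
      apply hi
      refine rsupp_apply_eq_zero h (Matrix.vecMul u A) ?_
      rw [rsupp_vecMul]
      exact ⟨u, hu.2, rfl⟩
  · -- backward direction
    intro h c hc c' hc' h0 h0' hbot
    set U := rsupp Fq c with hUdef
    set W0 := rsupp Fq c' with hW0def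
    obtain ⟨q, hq⟩ := Submodule.exists_isCompl (U ⊔ W0)
    set W := W0 ⊔ q with hWdef
    have hUW : IsCompl U W := by
      constructor
      · rw [Submodule.disjoint_def]
        intro x hxU hxW
        obtain ⟨y, hy, z, hz, rfl⟩ := Submodule.mem_sup.mp hxW
        have hz0 : z = 0 := by
          have hz1 : z ∈ U ⊔ W0 := by
            have hyz : y + z - y = z := by ring
            rw [← hyz]
            exact Submodule.sub_mem _ (Submodule.mem_sup_left hxU)
              (Submodule.mem_sup_right hy)
          exact (Submodule.disjoint_def.mp hq.disjoint) z hz1 hz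
        rw [hz0, add_zero] at hxU ⊢
        have : y ∈ U ⊓ W0 := ⟨hxU, hy⟩
        rw [hbot] at this
        exact this
      · rw [codisjoint_iff, hWdef, ← sup_assoc]
        exact codisjoint_iff.mp hq.codisjoint
    -- build the adapted basis
    set r := finrank Fq U with hr
    set s := finrank Fq W with hs
    let bU : Basis (Fin r) Fq U := Module.finBasis Fq U
    let bW : Basis (Fin s) Fq W := Module.finBasis Fq W
    let b : Basis (Fin r ⊕ Fin s) Fq (Fin n → Fq) :=
      (bU.prod bW).map (Submodule.prodEquivOfIsCompl U W hUW)
    have hcard : Fintype.card (Fin n) = Fintype.card (Fin r ⊕ Fin s) := by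
      simp only [Fintype.card_fin, Fintype.card_sum]
      rw [hr, hs, Submodule.finrank_add_eq_of_isCompl hUW, Module.finrank_fin_fun]
    let e0 : Fin n ≃ (Fin r ⊕ Fin s) := Fintype.equivOfCardEq hcard
    let e : (Fin n → Fq) ≃ₗ[Fq] (Fin n → Fq) :=
      b.equivFun.trans (LinearEquiv.funCongrLeft Fq Fq e0)
    have he : ∀ v i, e v i = b.repr v (e0 i) := by
      intro v i
      simp [e, LinearEquiv.funCongrLeft_apply, Basis.equivFun_apply, LinearMap.funLeft]
    have hL : ∀ u ∈ U, ∀ j, b.repr u (Sum.inr j) = 0 := by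
      intro u hu j
      have h2 : ((Submodule.prodEquivOfIsCompl U W hUW).symm u).2 = 0 :=
        (Submodule.prodEquivOfIsCompl_symm_apply_snd_eq_zero U W hUW).mpr hu
      show ((bU.prod bW).map (Submodule.prodEquivOfIsCompl U W hUW)).repr u (Sum.inr j) = 0
      rw [Basis.map_repr, LinearEquiv.trans_apply, Basis.prod_repr_inr, h2]
      simp
    have hR : ∀ w ∈ W, ∀ j, b.repr w (Sum.inl j) = 0 := by
      intro w hw j
      have h1 : ((Submodule.prodEquivOfIsCompl U W hUW).symm w).1 = 0 :=
        (Submodule.prodEquivOfIsCompl_symm_apply_fst_eq_zero U W hUW).mpr hw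
      show ((bU.prod bW).map (Submodule.prodEquivOfIsCompl U W hUW)).repr w (Sum.inl j) = 0
      rw [Basis.map_repr, LinearEquiv.trans_apply, Basis.prod_repr_inl, h1]
      simp
    -- the matrix
    set M := LinearMap.toMatrix' (e : (Fin n → Fq) →ₗ[Fq] (Fin n → Fq)) with hMdef
    have hM : ∀ v, Matrix.vecMul v Mᵀ = e v := by
      intro v
      rw [Matrix.vecMul_transpose, ← Matrix.toLin'_apply, hMdef, Matrix.toLin'_toMatrix']
      rfl
    have hMunit : IsUnit Mᵀ := by
      rw [Matrix.isUnit_iff_isUnit_det, Matrix.det_transpose]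
      have h1 : M * LinearMap.toMatrix'
          (e.symm : (Fin n → Fq) →ₗ[Fq] (Fin n → Fq)) = 1 := by
        rw [hMdef, ← LinearMap.toMatrix'_comp]
        simp
      have := congrArg Matrix.det h1
      rw [Matrix.det_mul, Matrix.det_one] at this
      exact IsUnit.of_mul_eq_one _ this
    obtain ⟨i, hi, hi'⟩ := h Mᵀ hMunit c hc c' hc' h0 h0'
    -- derive the contradiction
    obtain ⟨v, hv, hvi⟩ := exists_rsupp_ne (Fq := Fq) hi
    obtain ⟨v', hv', hvi'⟩ := exists_rsupp_ne (Fq := Fq) hi'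
    rw [rsupp_vecMul] at hv hv'
    obtain ⟨u, huU, rfl⟩ := hv
    obtain ⟨u', huW, rfl⟩ := hv'
    have hu1 : Matrix.vecMulLinear Mᵀ u i = e u i := by
      rw [Matrix.vecMulLinear_apply, hM]
    have hu2 : Matrix.vecMulLinear Mᵀ u' i = e u' i := by
      rw [Matrix.vecMulLinear_apply, hM]
    rw [hu1, he] at hvi
    rw [hu2, he] at hvi'
    have huW' : u' ∈ W := Submodule.mem_sup_left huW
    cases h' : e0 i with
    | inl j =>
      rw [h'] at hvi'
      exact hvi' (hR u' huW' j)
    | inr j =>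
      rw [h'] at hvi
      exact hvi (hL u huU j)
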